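/- Let A and B be Banach algebras and T ∈ hom(B, A) a surjective homomorphism. Then Z_t^{(ℓ)}((A ×_T B)'') = Z_t^{(ℓ)}(A'') ×_{T''} Z_t^{(ℓ)}(B''). In particular, A ×_T B is Arens regular if and only if both A and B are Arens regular. -/

import Mathlib

open ContinuousLinearMap NormedSpace

variable {A B : Type*}
  [NonUnitalNormedRing A] [NormedSpace ℂ A] [IsScalarTower ℂ A A] [SMulCommClass ℂ A A]
  [CompleteSpace A]
  [NonUnitalNormedRing B] [NormedSpace ℂ B] [IsScalarTower ℂ B B] [SMulCommClass ℂ B B]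
  [CompleteSpace B]

/-- The morphism-product multiplication on `A × B`:
`(a₁,b₁)·(a₂,b₂) = (a₁a₂ + a₁T(b₂) + T(b₁)a₂, b₁b₂)`. -/
noncomputable def tMul (T : B →L[ℂ] A) (u v : A × B) : A × B :=
  (u.1 * v.1 + u.1 * T v.2 + T u.2 * v.1, u.2 * v.2)

/-- The ℓ¹ norm `‖(a,b)‖ = ‖a‖ + ‖b‖` on `A × B`. -/
noncomputable def tNorm (u : A × B) : ℝ := ‖u.1‖ + ‖u.2‖

/-- Auxiliary map: for `Φ` in the second dual of `E` and a bundled bilinear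
multiplication `M` on `E`, this is `f ↦ (a ↦ Φ (f ∘ M a))`, i.e. `f ↦ Φ · f`. -/
noncomputable def rAct {E : Type*} [NormedAddCommGroup E] [NormedSpace ℂ E]
    (M : E →L[ℂ] E →L[ℂ] E) (Φ : StrongDual ℂ (StrongDual ℂ E)) : StrongDual ℂ E →L[ℂ] StrongDual ℂ E :=
  (compL ℂ E (StrongDual ℂ E) ℂ Φ).comp
    (((compL ℂ E (E →L[ℂ] E) (StrongDual ℂ E)).flip M).comp (compL ℂ E E ℂ))

/-- The first Arens product `Φ □ Ψ` on the second dual of `E`, where the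
multiplication of `E` is given by the bundled bilinear map `M`:
`⟨Φ□Ψ, f⟩ = ⟨Φ, Ψ·f⟩` with `(Ψ·f)(a) = Ψ(f·a)` and `(f·a)(x) = f(ax)`. -/
noncomputable def arens1 {E : Type*} [NormedAddCommGroup E] [NormedSpace ℂ E]
    (M : E →L[ℂ] E →L[ℂ] E) (Φ Ψ : StrongDual ℂ (StrongDual ℂ E)) : StrongDual ℂ (StrongDual ℂ E) :=
  Φ.comp (rAct M Ψ)

/-- The second Arens product `Φ ◊ Ψ` on the second dual of `E`:
`⟨Φ◊Ψ, f⟩ = ⟨Ψ, f·Φ⟩` with `(f·Φ)(a) = Φ(a·f)` and `(a·f)(x) = f(xa)`. -/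
noncomputable def arens2 {E : Type*} [NormedAddCommGroup E] [NormedSpace ℂ E]
    (M : E →L[ℂ] E →L[ℂ] E) (Φ Ψ : StrongDual ℂ (StrongDual ℂ E)) : StrongDual ℂ (StrongDual ℂ E) :=
  Ψ.comp (rAct M.flip Φ)

/-- Bundled bilinear map `(u,v) ↦ M (f u) (g v)`. -/
noncomputable def bcomp {P E : Type*} [NormedAddCommGroup P] [NormedSpace ℂ P]
    [NormedAddCommGroup E] [NormedSpace ℂ E]
    (M : E →L[ℂ] E →L[ℂ] E) (f g : P →L[ℂ] E) : P →L[ℂ] P →L[ℂ] E :=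
  ((compL ℂ P E E).flip g).comp (M.comp f)

/-- The morphism-product multiplication `tMul T`, as a bundled bilinear map;
`tMulCLM T u v = tMul T u v`. -/
noncomputable def tMulCLM (T : B →L[ℂ] A) : (A × B) →L[ℂ] (A × B) →L[ℂ] (A × B) :=
  ((compL ℂ (A × B) A (A × B) (inl ℂ A B)).comp
    (bcomp (mul ℂ A) (fst ℂ A B) (fst ℂ A B + T.comp (snd ℂ A B)) +
     bcomp (mul ℂ A) (T.comp (snd ℂ A B)) (fst ℂ A B))) +
  ((compL ℂ (A × B) B (A × B) (inr ℂ A B)).comp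
    (bcomp (mul ℂ B) (snd ℂ A B) (snd ℂ A B)))

/-- The adjoint `T' : A' → B'`, `T'(f) = f ∘ T`. -/
noncomputable def dualT (T : B →L[ℂ] A) : StrongDual ℂ A →L[ℂ] StrongDual ℂ B := (compL ℂ B A ℂ).flip T

/-- The double adjoint `T'' : B'' → A''`, `T''(F) = F ∘ T'`. -/
noncomputable def ddT (T : B →L[ℂ] A) : StrongDual ℂ (StrongDual ℂ B) →L[ℂ] StrongDual ℂ (StrongDual ℂ A) :=
  (compL ℂ (StrongDual ℂ A) (StrongDual ℂ B) ℂ).flip (dualT T)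

/-- The identification `Θ : A'' × B'' → (A × B)''`, `Θ(Φ,Ψ)(F) = Φ(F∘inl) + Ψ(F∘inr)`,
i.e. `Θ(Φ,Ψ)(f,g) = Φ(f) + Ψ(g)` under the identification `(A × B)' ≅ A' × B'`. -/
noncomputable def Theta (Φ : StrongDual ℂ (StrongDual ℂ A)) (Ψ : StrongDual ℂ (StrongDual ℂ B)) :
    StrongDual ℂ (StrongDual ℂ (A × B)) :=
  Φ.comp ((compL ℂ A (A × B) ℂ).flip (inl ℂ A B)) +
  Ψ.comp ((compL ℂ B (A × B) ℂ).flip (inr ℂ A B))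

/-- The functional `(a,b) ↦ φ(a) + φ(T(b))` on `A × B`, for `φ : A → ℂ`. -/
noncomputable def charExt (T : B →L[ℂ] A) (φ : A →L[ℂ] ℂ) : (A × B) →L[ℂ] ℂ :=
  φ.comp (fst ℂ A B) + (φ.comp T).comp (snd ℂ A B)

/-- The functional `(a,b) ↦ ψ(b)` on `A × B`, for `ψ : B → ℂ`. -/
noncomputable def charSnd (ψ : B →L[ℂ] ℂ) : (A × B) →L[ℂ] ℂ :=
  ψ.comp (snd ℂ A B)


/-! ### Auxiliary machinery -/

section AuxGeneral
variable {P E F : Type*} [NormedAddCommGroup P] [NormedSpace ℂ P]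
  [NormedAddCommGroup E] [NormedSpace ℂ E] [NormedAddCommGroup F] [NormedSpace ℂ F]

/-- The double adjoint of an arbitrary continuous linear map. -/
noncomputable def dd' (S : P →L[ℂ] E) (X : StrongDual ℂ (StrongDual ℂ P)) : StrongDual ℂ (StrongDual ℂ E) :=
  X.comp ((compL ℂ P E ℂ).flip S)

@[simp] lemma dd'_apply (S : P →L[ℂ] E) (X : StrongDual ℂ (StrongDual ℂ P)) (f : StrongDual ℂ E) :
    dd' S X f = X (f.comp S) := rfl

@[simp] lemma rAct_apply (M : E →L[ℂ] E →L[ℂ] E) (Φ : StrongDual ℂ (StrongDual ℂ E)) (f : StrongDual ℂ E) (a : E) :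
    rAct M Φ f a = Φ (f.comp (M a)) := rfl

@[simp] lemma arens1_apply (M : E →L[ℂ] E →L[ℂ] E) (Φ Ψ : StrongDual ℂ (StrongDual ℂ E)) (f : StrongDual ℂ E) :
    arens1 M Φ Ψ f = Φ (rAct M Ψ f) := rfl

@[simp] lemma arens2_apply (M : E →L[ℂ] E →L[ℂ] E) (Φ Ψ : StrongDual ℂ (StrongDual ℂ E)) (f : StrongDual ℂ E) :
    arens2 M Φ Ψ f = Ψ (rAct M.flip Φ f) := rfl

@[simp] lemma bcomp_apply (M : E →L[ℂ] E →L[ℂ] E) (f g : P →L[ℂ] E) (u v : P) :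
    bcomp M f g u v = M (f u) (g v) := rfl

lemma dd'_add (S : P →L[ℂ] E) (X Y : StrongDual ℂ (StrongDual ℂ P)) :
    dd' S (X + Y) = dd' S X + dd' S Y := by ext f; simp

@[simp] lemma dd'_zero (S : P →L[ℂ] E) : dd' S (0 : StrongDual ℂ (StrongDual ℂ P)) = 0 := by ext f; simp

lemma dd'_addS (S₁ S₂ : P →L[ℂ] E) (X : StrongDual ℂ (StrongDual ℂ P)) :
    dd' (S₁ + S₂) X = dd' S₁ X + dd' S₂ X := by
  ext f; simp [ContinuousLinearMap.comp_add]

lemma dd'_comp (S₁ : P →L[ℂ] E) (S₂ : E →L[ℂ] F) (X : StrongDual ℂ (StrongDual ℂ P)) :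
    dd' (S₂.comp S₁) X = dd' S₂ (dd' S₁ X) := by
  ext f; simp [ContinuousLinearMap.comp_assoc]

lemma rAct_addM (M₁ M₂ : E →L[ℂ] E →L[ℂ] E) (Ψ : StrongDual ℂ (StrongDual ℂ E)) :
    rAct (M₁ + M₂) Ψ = rAct M₁ Ψ + rAct M₂ Ψ := by
  ext f a; simp [ContinuousLinearMap.comp_add]

lemma arens1_addM (M₁ M₂ : E →L[ℂ] E →L[ℂ] E) (X Y : StrongDual ℂ (StrongDual ℂ E)) :
    arens1 (M₁ + M₂) X Y = arens1 M₁ X Y + arens1 M₂ X Y := by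
  ext f; simp [rAct_addM]

lemma flip_addM (M₁ M₂ : E →L[ℂ] E →L[ℂ] E) : (M₁ + M₂).flip = M₁.flip + M₂.flip := by
  ext a b; simp

lemma arens2_addM (M₁ M₂ : E →L[ℂ] E →L[ℂ] E) (X Y : StrongDual ℂ (StrongDual ℂ E)) :
    arens2 (M₁ + M₂) X Y = arens2 M₁ X Y + arens2 M₂ X Y := by
  ext f; simp [flip_addM, rAct_addM]

lemma arens1_addX (M : E →L[ℂ] E →L[ℂ] E) (X₁ X₂ Y : StrongDual ℂ (StrongDual ℂ E)) :
    arens1 M (X₁ + X₂) Y = arens1 M X₁ Y + arens1 M X₂ Y := by ext f; simp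

lemma arens1_addY (M : E →L[ℂ] E →L[ℂ] E) (X Y₁ Y₂ : StrongDual ℂ (StrongDual ℂ E)) :
    arens1 M X (Y₁ + Y₂) = arens1 M X Y₁ + arens1 M X Y₂ := by
  ext f
  have : rAct M (Y₁ + Y₂) f = rAct M Y₁ f + rAct M Y₂ f := by ext a; simp
  simp [this]

lemma arens2_addX (M : E →L[ℂ] E →L[ℂ] E) (X₁ X₂ Y : StrongDual ℂ (StrongDual ℂ E)) :
    arens2 M (X₁ + X₂) Y = arens2 M X₁ Y + arens2 M X₂ Y := by
  ext f
  have : rAct M.flip (X₁ + X₂) f = rAct M.flip X₁ f + rAct M.flip X₂ f := by ext a; simp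
  simp [this]

lemma arens2_addY (M : E →L[ℂ] E →L[ℂ] E) (X Y₁ Y₂ : StrongDual ℂ (StrongDual ℂ E)) :
    arens2 M X (Y₁ + Y₂) = arens2 M X Y₁ + arens2 M X Y₂ := by ext f; simp

@[simp] lemma arens1_zeroX (M : E →L[ℂ] E →L[ℂ] E) (Y : StrongDual ℂ (StrongDual ℂ E)) :
    arens1 M 0 Y = 0 := by ext f; simp

@[simp] lemma arens1_zeroY (M : E →L[ℂ] E →L[ℂ] E) (X : StrongDual ℂ (StrongDual ℂ E)) :
    arens1 M X 0 = 0 := by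
  ext f
  have : rAct M (0 : StrongDual ℂ (StrongDual ℂ E)) f = 0 := by ext a; simp
  simp [this]

@[simp] lemma arens2_zeroX (M : E →L[ℂ] E →L[ℂ] E) (Y : StrongDual ℂ (StrongDual ℂ E)) :
    arens2 M 0 Y = 0 := by
  ext f
  have : rAct M.flip (0 : StrongDual ℂ (StrongDual ℂ E)) f = 0 := by ext a; simp
  simp [this]

@[simp] lemma arens2_zeroY (M : E →L[ℂ] E →L[ℂ] E) (X : StrongDual ℂ (StrongDual ℂ E)) :
    arens2 M X 0 = 0 := by ext f; simp

lemma arens1_bcomp (M : E →L[ℂ] E →L[ℂ] E) (j : E →L[ℂ] P) (f g : P →L[ℂ] E)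
    (X Y : StrongDual ℂ (StrongDual ℂ P)) :
    arens1 ((compL ℂ P E P j).comp (bcomp M f g)) X Y
      = dd' j (arens1 M (dd' f X) (dd' g Y)) := rfl

lemma arens2_bcomp (M : E →L[ℂ] E →L[ℂ] E) (j : E →L[ℂ] P) (f g : P →L[ℂ] E)
    (X Y : StrongDual ℂ (StrongDual ℂ P)) :
    arens2 ((compL ℂ P E P j).comp (bcomp M f g)) X Y
      = dd' j (arens2 M (dd' f X) (dd' g Y)) := rfl

end AuxGeneral

set_option linter.unusedSectionVars false

section AuxProd

@[simp] lemma theta_apply (Φ : StrongDual ℂ (StrongDual ℂ A)) (Ψ : StrongDual ℂ (StrongDual ℂ B))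
    (F : StrongDual ℂ (A × B)) :
    Theta Φ Ψ F = Φ (F.comp (inl ℂ A B)) + Ψ (F.comp (inr ℂ A B)) := rfl

lemma theta_eq (Φ : StrongDual ℂ (StrongDual ℂ A)) (Ψ : StrongDual ℂ (StrongDual ℂ B)) :
    Theta Φ Ψ = dd' (inl ℂ A B) Φ + dd' (inr ℂ A B) Ψ := rfl

lemma ddT_eq (T : B →L[ℂ] A) (Ψ : StrongDual ℂ (StrongDual ℂ B)) : ddT T Ψ = dd' T Ψ := rfl

@[simp] lemma dd'_fst_theta (Φ : StrongDual ℂ (StrongDual ℂ A)) (Ψ : StrongDual ℂ (StrongDual ℂ B)) :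
    dd' (fst ℂ A B) (Theta Φ Ψ) = Φ := by
  ext f
  have h1 : (f.comp (fst ℂ A B)).comp (inl ℂ A B) = f := by ext a; simp
  have h2 : (f.comp (fst ℂ A B)).comp (inr ℂ A B) = 0 := by ext b; simp
  simp [h1, h2]

@[simp] lemma dd'_snd_theta (Φ : StrongDual ℂ (StrongDual ℂ A)) (Ψ : StrongDual ℂ (StrongDual ℂ B)) :
    dd' (snd ℂ A B) (Theta Φ Ψ) = Ψ := by
  ext f
  have h1 : (f.comp (snd ℂ A B)).comp (inl ℂ A B) = 0 := by ext a; simp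
  have h2 : (f.comp (snd ℂ A B)).comp (inr ℂ A B) = f := by ext b; simp
  simp [h1, h2]

lemma theta_surj (X : StrongDual ℂ (StrongDual ℂ (A × B))) :
    Theta (dd' (fst ℂ A B) X) (dd' (snd ℂ A B) X) = X := by
  ext F
  simp only [theta_apply, dd'_apply]
  rw [← map_add]
  congr 1
  apply ContinuousLinearMap.ext
  intro u
  simp only [ContinuousLinearMap.add_apply, ContinuousLinearMap.comp_apply]
  rw [← map_add]
  congr 1
  simp

lemma arens1_theta (T : B →L[ℂ] A) (Φ Φ' : StrongDual ℂ (StrongDual ℂ A)) (Ψ Ψ' : StrongDual ℂ (StrongDual ℂ B)) :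
    arens1 (tMulCLM T) (Theta Φ Ψ) (Theta Φ' Ψ')
      = Theta (arens1 (mul ℂ A) Φ Φ' + arens1 (mul ℂ A) Φ (dd' T Ψ')
            + arens1 (mul ℂ A) (dd' T Ψ) Φ')
          (arens1 (mul ℂ B) Ψ Ψ') := by
  rw [tMulCLM, ContinuousLinearMap.comp_add, arens1_addM, arens1_addM,
    arens1_bcomp, arens1_bcomp, arens1_bcomp]
  simp only [dd'_addS, dd'_comp, dd'_fst_theta, dd'_snd_theta]
  rw [arens1_addY, theta_eq]
  simp only [dd'_add]

lemma arens2_theta (T : B →L[ℂ] A) (Φ Φ' : StrongDual ℂ (StrongDual ℂ A)) (Ψ Ψ' : StrongDual ℂ (StrongDual ℂ B)) :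
    arens2 (tMulCLM T) (Theta Φ Ψ) (Theta Φ' Ψ')
      = Theta (arens2 (mul ℂ A) Φ Φ' + arens2 (mul ℂ A) Φ (dd' T Ψ')
            + arens2 (mul ℂ A) (dd' T Ψ) Φ')
          (arens2 (mul ℂ B) Ψ Ψ') := by
  rw [tMulCLM, ContinuousLinearMap.comp_add, arens2_addM, arens2_addM,
    arens2_bcomp, arens2_bcomp, arens2_bcomp]
  simp only [dd'_addS, dd'_comp, dd'_fst_theta, dd'_snd_theta]
  rw [arens2_addY, theta_eq]
  simp only [dd'_add]

end AuxProd

section AuxHom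

lemma hom1 (T : B →L[ℂ] A) (hT : ∀ x y, T (x * y) = T x * T y)
    (Ψ₁ Ψ₂ : StrongDual ℂ (StrongDual ℂ B)) :
    arens1 (mul ℂ A) (dd' T Ψ₁) (dd' T Ψ₂) = dd' T (arens1 (mul ℂ B) Ψ₁ Ψ₂) := by
  ext f
  simp only [arens1_apply, dd'_apply]
  congr 1
  apply ContinuousLinearMap.ext
  intro b
  simp only [ContinuousLinearMap.comp_apply, rAct_apply, dd'_apply]
  congr 1
  apply ContinuousLinearMap.ext
  intro b'
  simp only [ContinuousLinearMap.comp_apply, ContinuousLinearMap.mul_apply']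
  exact congrArg f (hT b b').symm

lemma hom2 (T : B →L[ℂ] A) (hT : ∀ x y, T (x * y) = T x * T y)
    (Ψ₁ Ψ₂ : StrongDual ℂ (StrongDual ℂ B)) :
    arens2 (mul ℂ A) (dd' T Ψ₁) (dd' T Ψ₂) = dd' T (arens2 (mul ℂ B) Ψ₁ Ψ₂) := by
  ext f
  simp only [arens2_apply, dd'_apply]
  congr 1
  apply ContinuousLinearMap.ext
  intro b
  simp only [ContinuousLinearMap.comp_apply, rAct_apply, dd'_apply,
    ContinuousLinearMap.flip_apply]
  congr 1
  apply ContinuousLinearMap.ext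
  intro b'
  simp only [ContinuousLinearMap.comp_apply, ContinuousLinearMap.mul_apply',
    ContinuousLinearMap.flip_apply]
  exact congrArg f (hT b' b).symm

lemma ddT_surj (T : B →L[ℂ] A) (hsurj : Function.Surjective T) :
    ∀ Φ : StrongDual ℂ (StrongDual ℂ A), ∃ Ψ : StrongDual ℂ (StrongDual ℂ B), dd' T Ψ = Φ := by
  obtain ⟨C, Cpos, hC⟩ := T.exists_preimage_norm_le hsurj
  intro Φ
  -- T' is injective
  set T' : StrongDual ℂ A →L[ℂ] StrongDual ℂ B := (compL ℂ B A ℂ).flip T with hT'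
  have hT'app : ∀ (f : StrongDual ℂ A) (b : B), T' f b = f (T b) := fun f b => rfl
  have hinj : Function.Injective (T' : StrongDual ℂ A →ₗ[ℂ] StrongDual ℂ B) := by
    intro f g hfg
    ext a
    obtain ⟨b, hb, -⟩ := hC a
    have := congrArg (fun h : StrongDual ℂ B => h b) hfg
    simpa [hT'app, hb] using this
  have hbelow : ∀ f : StrongDual ℂ A, ‖f‖ ≤ C * ‖T' f‖ := by
    intro f
    refine f.opNorm_le_bound (by positivity) fun a => ?_
    obtain ⟨b, hb, hbn⟩ := hC a
    calc ‖f a‖ = ‖T' f b‖ := by rw [hT'app, hb]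
      _ ≤ ‖T' f‖ * ‖b‖ := (T' f).le_opNorm b
      _ ≤ ‖T' f‖ * (C * ‖a‖) := by
          exact mul_le_mul_of_nonneg_left hbn (norm_nonneg _)
      _ = C * ‖T' f‖ * ‖a‖ := by ring
  set p : Subspace ℂ (StrongDual ℂ B) := LinearMap.range (T' : StrongDual ℂ A →ₗ[ℂ] StrongDual ℂ B) with hp
  let e : StrongDual ℂ A ≃ₗ[ℂ] p := LinearEquiv.ofInjective _ hinj
  let φ₀ : p →ₗ[ℂ] ℂ := Φ.toLinearMap.comp (e.symm : p →ₗ[ℂ] StrongDual ℂ A)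
  have hbound : ∀ x : p, ‖φ₀ x‖ ≤ (‖Φ‖ * C) * ‖x‖ := by
    intro x
    have hval : ∀ y : StrongDual ℂ A, ((e y : p) : StrongDual ℂ B) = T' y := fun y =>
      LinearEquiv.ofInjective_apply _ _
    have hx : T' (e.symm x) = (x : StrongDual ℂ B) := by
      rw [← hval]; exact congrArg Subtype.val (e.apply_symm_apply x)
    calc ‖φ₀ x‖ = ‖Φ (e.symm x)‖ := rfl
      _ ≤ ‖Φ‖ * ‖(e.symm x : StrongDual ℂ A)‖ := Φ.le_opNorm _
      _ ≤ ‖Φ‖ * (C * ‖T' (e.symm x)‖) :=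
          mul_le_mul_of_nonneg_left (hbelow _) (norm_nonneg Φ)
      _ = (‖Φ‖ * C) * ‖x‖ := by rw [hx]; rw [mul_assoc]; rfl
  let φc : p →L[ℂ] ℂ := LinearMap.mkContinuous (E := p) φ₀ (‖Φ‖ * C) hbound
  obtain ⟨g, hg, -⟩ := exists_extension_norm_eq p φc
  refine ⟨g, ?_⟩
  ext f
  have hmem : T' f ∈ p := ⟨f, rfl⟩
  have h1 : dd' T g f = g (T' f) := rfl
  have h2 : g (T' f) = φc ⟨T' f, hmem⟩ := hg ⟨T' f, hmem⟩
  have h3 : (⟨T' f, hmem⟩ : p) = e f := by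
    apply Subtype.ext
    exact (LinearEquiv.ofInjective_apply _ _).symm
  have h4 : φc (e f) = Φ (e.symm (e f)) := rfl
  rw [h1, h2, h3, h4, e.symm_apply_apply]

end AuxHom

section AuxMain

lemma ddT_central (T : B →L[ℂ] A) (hT : ∀ x y, T (x * y) = T x * T y)
    (hsurj : Function.Surjective T) (Ψ : StrongDual ℂ (StrongDual ℂ B))
    (hΨ : ∀ Ψ', arens1 (mul ℂ B) Ψ Ψ' = arens2 (mul ℂ B) Ψ Ψ') :
    ∀ Φ' : StrongDual ℂ (StrongDual ℂ A),
      arens1 (mul ℂ A) (dd' T Ψ) Φ' = arens2 (mul ℂ A) (dd' T Ψ) Φ' := by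
  intro Φ'
  obtain ⟨Ψ₀, rfl⟩ := ddT_surj T hsurj Φ'
  rw [hom1 T hT, hΨ, ← hom2 T hT]

lemma part1 (T : B →L[ℂ] A) (hT : ∀ x y, T (x * y) = T x * T y)
    (hsurj : Function.Surjective T) (Φ : StrongDual ℂ (StrongDual ℂ A)) (Ψ : StrongDual ℂ (StrongDual ℂ B)) :
    (∀ X : StrongDual ℂ (StrongDual ℂ (A × B)),
        arens1 (tMulCLM T) (Theta Φ Ψ) X = arens2 (tMulCLM T) (Theta Φ Ψ) X) ↔
      ((∀ Φ' : StrongDual ℂ (StrongDual ℂ A),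
          arens1 (mul ℂ A) Φ Φ' = arens2 (mul ℂ A) Φ Φ') ∧
       (∀ Ψ' : StrongDual ℂ (StrongDual ℂ B),
          arens1 (mul ℂ B) Ψ Ψ' = arens2 (mul ℂ B) Ψ Ψ')) := by
  constructor
  · intro h
    have hB : ∀ Ψ', arens1 (mul ℂ B) Ψ Ψ' = arens2 (mul ℂ B) Ψ Ψ' := by
      intro Ψ'
      have h0 := h (Theta 0 Ψ')
      rw [arens1_theta, arens2_theta] at h0
      have h1 := congrArg (dd' (snd ℂ A B)) h0
      simpa only [dd'_snd_theta] using h1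
    refine ⟨?_, hB⟩
    intro Φ'
    have h0 := h (Theta Φ' 0)
    rw [arens1_theta, arens2_theta] at h0
    have hA := congrArg (dd' (fst ℂ A B)) h0
    simp only [dd'_fst_theta, dd'_zero, arens1_zeroY, arens2_zeroY, add_zero] at hA
    rw [ddT_central T hT hsurj Ψ hB Φ'] at hA
    ext f
    have h2 := congrArg (fun t : StrongDual ℂ (StrongDual ℂ A) => t f) hA
    simpa using h2
  · rintro ⟨hA, hB⟩ X
    rw [← theta_surj X, arens1_theta, arens2_theta]
    exact congrArg₂ Theta
      (by rw [hA, hA, ddT_central T hT hsurj Ψ hB]) (hB _)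

end AuxMain

/-- if `T` is surjective, then the left topological center of
`(A ×_T B)''` is exactly `Z_t^{(ℓ)}(A'') ×_{T''} Z_t^{(ℓ)}(B'')`; in particular
`A ×_T B` is Arens regular iff both `A` and `B` are Arens regular. -/
theorem left_topological_center_epimorphism
    (T : B →L[ℂ] A) (hT : ∀ x y, T (x * y) = T x * T y) (hTn : ‖T‖ ≤ 1)
    (hsurj : Function.Surjective T) :
    (∀ (Φ : StrongDual ℂ (StrongDual ℂ A)) (Ψ : StrongDual ℂ (StrongDual ℂ B)),
      (∀ X : StrongDual ℂ (StrongDual ℂ (A × B)),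
          arens1 (tMulCLM T) (Theta Φ Ψ) X = arens2 (tMulCLM T) (Theta Φ Ψ) X) ↔
        ((∀ Φ' : StrongDual ℂ (StrongDual ℂ A),
            arens1 (mul ℂ A) Φ Φ' = arens2 (mul ℂ A) Φ Φ') ∧
         (∀ Ψ' : StrongDual ℂ (StrongDual ℂ B),
            arens1 (mul ℂ B) Ψ Ψ' = arens2 (mul ℂ B) Ψ Ψ'))) ∧
    ((∀ X Y : StrongDual ℂ (StrongDual ℂ (A × B)),
        arens1 (tMulCLM T) X Y = arens2 (tMulCLM T) X Y) ↔
      ((∀ Φ Φ' : StrongDual ℂ (StrongDual ℂ A),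
          arens1 (mul ℂ A) Φ Φ' = arens2 (mul ℂ A) Φ Φ') ∧
       (∀ Ψ Ψ' : StrongDual ℂ (StrongDual ℂ B),
          arens1 (mul ℂ B) Ψ Ψ' = arens2 (mul ℂ B) Ψ Ψ'))) := by
  refine ⟨fun Φ Ψ => part1 T hT hsurj Φ Ψ, ?_, ?_⟩
  · intro h
    constructor
    · intro Φ Φ'
      exact ((part1 T hT hsurj Φ 0).mp (fun X => h (Theta Φ 0) X)).1 Φ'
    · intro Ψ Ψ'
      exact ((part1 T hT hsurj 0 Ψ).mp (fun X => h (Theta 0 Ψ) X)).2 Ψ'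
  · rintro ⟨hA, hB⟩ X Y
    rw [← theta_surj X]
    exact (part1 T hT hsurj _ _).mpr ⟨fun Φ' => hA _ Φ', fun Ψ' => hB _ Ψ'⟩ Y
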